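/- For λ > 0, ω > 0, ℏ > 0 and N ≥ 1, the sequence E_n = −ℏ²λ(n + N/2)² + ℏ(n + N/2)√(ℏ²λ²(n + N/2)² + ω²) is strictly increasing in n ∈ ℕ and converges to ω²/(2λ) as n → ∞. -/

import Mathlib

open Filter Topology

lemma stmt_19_key (lam om hbar x : ℝ) (hlam : 0 < lam) (hom : 0 < om) (hh : 0 < hbar)
    (hx : 0 < x) :
    -hbar ^ 2 * lam * x ^ 2 + hbar * x * Real.sqrt (hbar ^ 2 * lam ^ 2 * x ^ 2 + om ^ 2)
      = om ^ 2 / (Real.sqrt (lam ^ 2 + om ^ 2 / (hbar ^ 2 * x ^ 2)) + lam) := by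
  set s := Real.sqrt (lam ^ 2 + om ^ 2 / (hbar ^ 2 * x ^ 2)) with hs
  have hsnn : 0 ≤ s := Real.sqrt_nonneg _
  have hs2 : s ^ 2 = lam ^ 2 + om ^ 2 / (hbar ^ 2 * x ^ 2) := by
    rw [hs, Real.sq_sqrt]; positivity
  have hsq : Real.sqrt (hbar ^ 2 * lam ^ 2 * x ^ 2 + om ^ 2) = hbar * x * s := by
    rw [hs, ← Real.sqrt_sq (by positivity : (0:ℝ) ≤ hbar * x),
      ← Real.sqrt_mul (by positivity)]
    congr 1
    field_simp
  rw [hsq]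
  have hden : 0 < s + lam := by linarith
  rw [eq_div_iff (ne_of_gt hden)]
  have hs2' : hbar ^ 2 * x ^ 2 * s ^ 2 = hbar ^ 2 * x ^ 2 * lam ^ 2 + om ^ 2 := by
    rw [hs2]; field_simp
  linear_combination hs2'

theorem stmt_19 (lam om hbar : ℝ) (hlam : 0 < lam) (hom : 0 < om) (hh : 0 < hbar)
    (N : ℕ) (hN : 1 ≤ N)
    (E : ℕ → ℝ)
    (hE : ∀ n : ℕ, E n = -hbar ^ 2 * lam * ((n : ℝ) + (N : ℝ) / 2) ^ 2
        + hbar * ((n : ℝ) + (N : ℝ) / 2)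
          * Real.sqrt (hbar ^ 2 * lam ^ 2 * ((n : ℝ) + (N : ℝ) / 2) ^ 2 + om ^ 2)) :
    StrictMono E ∧ Tendsto E atTop (𝓝 (om ^ 2 / (2 * lam))) := by
  have hN' : (0:ℝ) < (N:ℝ) := by exact_mod_cast hN
  set u : ℕ → ℝ := fun n => (n : ℝ) + (N : ℝ) / 2 with hu
  have hupos : ∀ n, 0 < u n := fun n => by
    have hn : (0:ℝ) ≤ (n:ℝ) := Nat.cast_nonneg n
    simp only [hu]; positivity
  set s : ℕ → ℝ := fun n => Real.sqrt (lam ^ 2 + om ^ 2 / (hbar ^ 2 * (u n) ^ 2)) with hsdef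
  have hE' : ∀ n, E n = om ^ 2 / (s n + lam) := fun n => by
    rw [hE n]
    exact stmt_19_key lam om hbar (u n) hlam hom hh (hupos n)
  have hsnn : ∀ n, 0 ≤ s n := fun n => Real.sqrt_nonneg _
  constructor
  · apply strictMono_nat_of_lt_succ
    intro n
    rw [hE' n, hE' (n+1)]
    have hun : u n < u (n+1) := by
      simp only [hu]
      push_cast
      linarith
    have hlt : s (n+1) < s n := by
      apply Real.sqrt_lt_sqrt (by positivity)
      have h1 : 0 < hbar ^ 2 * (u n) ^ 2 := by have := hupos n; positivity
      have h2 : hbar ^ 2 * (u n) ^ 2 < hbar ^ 2 * (u (n+1)) ^ 2 := by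
        have h3 : (u n) ^ 2 < (u (n+1)) ^ 2 := by nlinarith [hupos n, hun]
        exact mul_lt_mul_of_pos_left h3 (by positivity)
      have := div_lt_div_of_pos_left (by positivity : (0:ℝ) < om ^ 2) h1 h2
      linarith
    apply div_lt_div_of_pos_left (by positivity) (by have := hsnn (n+1); linarith) (by linarith)
  · have huT : Tendsto u atTop atTop := by
      apply tendsto_atTop_add_const_right
      exact tendsto_natCast_atTop_atTop
    have h0 : Tendsto (fun n => om ^ 2 / (hbar ^ 2 * (u n) ^ 2)) atTop (𝓝 0) := by
      apply Tendsto.div_atTop tendsto_const_nhds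
      exact (tendsto_pow_atTop (by norm_num : 2 ≠ 0)).comp huT |>.const_mul_atTop (by positivity)
    have hsT : Tendsto s atTop (𝓝 lam) := by
      have h1 : Tendsto (fun n => lam ^ 2 + om ^ 2 / (hbar ^ 2 * (u n) ^ 2)) atTop
          (𝓝 (lam ^ 2)) := by
        simpa using (tendsto_const_nhds.add h0)
      have h2 := (Real.continuous_sqrt.tendsto (lam ^ 2)).comp h1
      simpa [hsdef, Function.comp_def, Real.sqrt_sq hlam.le] using h2
    have hT : Tendsto (fun n => om ^ 2 / (s n + lam)) atTop (𝓝 (om ^ 2 / (lam + lam))) :=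
      tendsto_const_nhds.div (hsT.add tendsto_const_nhds) (by positivity)
    have heq : om ^ 2 / (lam + lam) = om ^ 2 / (2 * lam) := by ring_nf
    rw [← heq]
    have : E = fun n => om ^ 2 / (s n + lam) := funext hE'
    rw [this]
    exact hT
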